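/- Let G be a DC graph on {1,...,N} and let (a,p) ∈ P_G, with unique stationary tuple s(a,p). Then, with the convention s_0(a,p) := 0, for every i ∈ {1,...,N} one has s_i(a,p) − s_{i−1}(a,p) = z_i^G(a,p). In particular, the speed of the front of the stationary liquid bin model with parameters (a,p), namely 1/s_1(a,p), equals (1 + Σ_{j=1}^N Γ^G_{1,j}(q_{b_G(j)} − q_{b_G(j−1)})/q_{b_G(j−1)}) / (Σ_{j=1}^N Γ^G_{1,j}·d_j/q_{b_G(j−1)}). -/

import Mathlib

open Filter Topology
open scoped Classical

noncomputable section

/-- The positive part `x₊ = max x 0` of a real number. -/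
def pos' (x : ℝ) : ℝ := max x 0

/-- `qq p i = p 1 + ... + p i` (so `qq p 0 = 0`). -/
def qq (p : ℕ → ℝ) (i : ℕ) : ℝ := ∑ j ∈ Finset.Icc 1 i, p j

/-- `dpar a i = a i - a (i-1)`, with the convention `a 0 = 0`. -/
def dpar (a : ℕ → ℝ) (i : ℕ) : ℝ := if i = 1 then a 1 else a i - a (i - 1)

/-- `(a, p)` is a parameter tuple in `P^{2N}`:
`0 < a 1 < a 2 < ... < a N` and `p 1, ..., p N > 0`. -/
def IsParam (N : ℕ) (a p : ℕ → ℝ) : Prop :=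
  0 < a 1 ∧ (∀ i, 1 ≤ i → i < N → a i < a (i + 1)) ∧ (∀ i, 1 ≤ i → i ≤ N → 0 < p i)

/-- `s` is a stationary tuple for the parameters `(a, p)`:
`0 < s 1 < ... < s N` and `a i = ∑_{j=1}^N p j * (s i - s j + s 1)₊` for `1 ≤ i ≤ N`. -/
def IsStatTuple (N : ℕ) (a p s : ℕ → ℝ) : Prop :=
  0 < s 1 ∧ (∀ i, 1 ≤ i → i < N → s i < s (i + 1)) ∧
  ∀ i, 1 ≤ i → i ≤ N → a i = ∑ j ∈ Finset.Icc 1 N, p j * pos' (s i - s j + s 1)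

/-- The inverse of (the restriction to `[0, ∞)` of) a function `y : ℝ → ℝ`. -/
def tinv (y : ℝ → ℝ) (x : ℝ) : ℝ := Function.invFunOn y (Set.Ici 0) x

/-- The right derivative of `y` at `t` (the derivative of `y` at `t` within `[t, ∞)`). -/
def rD (y : ℝ → ℝ) (t : ℝ) : ℝ := derivWithin y (Set.Ici t) t

/-- The sequence `(y k)` satisfies recurrence (R).  The condition on the initial function `y 0`
(continuous, piecewise linear with at most `N` points of non-differentiability, vanishing at `0`,
with non-decreasing right derivative taking values in `{q 1, ..., q N}`) is encoded through its
canonical representation: such functions are exactly those of the form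
`t ↦ ∑_{j=1}^N p j * (t - c j)₊` with `c` non-negative, non-decreasing and `c 1 = 0`. -/
def SatisfiesR (N : ℕ) (a p : ℕ → ℝ) (y : ℕ → ℝ → ℝ) : Prop :=
  (∃ c : ℕ → ℝ, c 1 = 0 ∧ (∀ j, 1 ≤ j → j ≤ N → 0 ≤ c j) ∧
      (∀ j, 1 ≤ j → j < N → c j ≤ c (j + 1)) ∧
      ∀ t : ℝ, 0 ≤ t → y 0 t = ∑ j ∈ Finset.Icc 1 N, p j * pos' (t - c j)) ∧
  ∀ k : ℕ, ∀ t : ℝ, 0 ≤ t →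
    y (k + 1) t = ∑ j ∈ Finset.Icc 1 N, p j * pos' (t - tinv (y k) (a j) + tinv (y k) (a 1))

/-- The breakpoints `c j` of the lower bounding trajectory `y₀⁻`:
`c 1 = 0` and `c j = d 1 / q 1 + ∑_{l=2}^j d l / q (l-1)` for `j ≥ 2`. -/
def cminus (a p : ℕ → ℝ) (j : ℕ) : ℝ :=
  if j ≤ 1 then 0
  else a 1 / qq p 1 + ∑ l ∈ Finset.Icc 2 j, (a l - a (l - 1)) / qq p (l - 1)

/-- The lower bounding initial trajectory `y₀⁻`. -/
def yminus0 (N : ℕ) (a p : ℕ → ℝ) : ℝ → ℝ :=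
  fun t => ∑ j ∈ Finset.Icc 1 N, p j * pos' (t - cminus a p j)

/-- The upper bounding initial trajectory `y₀⁺ : t ↦ q N * t`. -/
def yplus0 (N : ℕ) (p : ℕ → ℝ) : ℝ → ℝ := fun t => qq p N * t

/-- The sequence satisfying recurrence (R) with prescribed initial term `y0`. -/
def iterR (N : ℕ) (a p : ℕ → ℝ) (y0 : ℝ → ℝ) : ℕ → ℝ → ℝ
  | 0 => y0
  | k + 1 => fun t =>
      ∑ j ∈ Finset.Icc 1 N,
        p j * pos' (t - tinv (iterR N a p y0 k) (a j) + tinv (iterR N a p y0 k) (a 1))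

/-- `y` is a stationary trajectory: an increasing bijection of `[0,∞)` satisfying the
fixed-point equation of recurrence (R). -/
def IsStatTraj (N : ℕ) (a p : ℕ → ℝ) (y : ℝ → ℝ) : Prop :=
  StrictMonoOn y (Set.Ici 0) ∧ Set.BijOn y (Set.Ici 0) (Set.Ici 0) ∧
  ∀ t : ℝ, 0 ≤ t → y t = ∑ j ∈ Finset.Icc 1 N, p j * pos' (t - tinv y (a j) + tinv y (a 1))

/-- `E_N`: the set of pairs `(i, j)` with `1 ≤ i < j ≤ N`. -/
def ENfin (N : ℕ) : Finset (ℕ × ℕ) :=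
  (Finset.Icc 1 N ×ˢ Finset.Icc 1 N).filter fun e => e.1 < e.2

/-- `Nested e e'` means `e ≼_E e'`, i.e. `e` is nested in `e'`. -/
def Nested (e e' : ℕ × ℕ) : Prop := e'.1 ≤ e.1 ∧ e.1 < e.2 ∧ e.2 ≤ e'.2

/-- `E` is the edge set of a downward closed graph on `{1, ..., N}`. -/
def IsDCGraph (N : ℕ) (E : Finset (ℕ × ℕ)) : Prop :=
  E ⊆ ENfin N ∧ ∀ e ∈ E, ∀ e' : ℕ × ℕ, Nested e' e → e' ∈ E

/-- `bG E i` is the greatest `j > i` with `(i, j) ∈ E`, and `i` if there is no such `j`;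
by convention `bG E 0 = 1`. -/
def bG (E : Finset (ℕ × ℕ)) (i : ℕ) : ℕ :=
  if i = 0 then 1 else max i ((E.filter fun e => e.1 = i).sup fun e => e.2)

/-- `m(G)`: the maximal elements of `E` for `≼_E`. -/
def maxE (E : Finset (ℕ × ℕ)) : Finset (ℕ × ℕ) :=
  E.filter fun e => ∀ e' ∈ E, Nested e e' → e' = e

/-- `M(G)`: the minimal elements of `E_N \ E` for `≼_E`. -/
def minNE (N : ℕ) (E : Finset (ℕ × ℕ)) : Finset (ℕ × ℕ) :=
  (ENfin N \ E).filter fun e => ∀ e' ∈ ENfin N \ E, Nested e' e → e' = e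

/-- The map `T(G) : ℝ^N → ℝ^N`. -/
def TG (a p : ℕ → ℝ) (E : Finset (ℕ × ℕ)) (s : ℕ → ℝ) (i : ℕ) : ℝ :=
  (1 / qq p (bG E i)) * (a i + ∑ j ∈ Finset.Icc 1 (bG E i), p j * (s j - s 1))

/-- The product of `γ` over the consecutive pairs (edges) of a list of vertices. -/
def pathProd (γ : ℕ → ℕ → ℝ) (l : List ℕ) : ℝ := (List.zipWith γ l l.tail).prod

/-- `Γ i j`: the sum, over all directed paths from `i` to `j` using edges of `E`, of the
product of `γ` over the edges of the path.  Since all edges of a DC graph increase, a directed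
path from `i` to `j` is identified with the set `S ⊆ (i, j)` of its intermediate vertices,
subject to consecutive vertices being joined by edges of `E`. -/
def GammaPath (E : Finset (ℕ × ℕ)) (γ : ℕ → ℕ → ℝ) (i j : ℕ) : ℝ :=
  if i = j then 1
  else if i < j then
    ∑ S ∈ (Finset.Ioo i j).powerset,
      if List.Chain' (fun u v => (u, v) ∈ E) (Finset.sort (insert i (insert j S)) (· ≤ ·))
      then pathProd γ (Finset.sort (insert i (insert j S)) (· ≤ ·)) else 0
  else 0

/-- The edge weight `γ^G_{i,j}`. -/
def gammaG (p : ℕ → ℝ) (E : Finset (ℕ × ℕ)) (i j : ℕ) : ℝ :=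
  (qq p (bG E i) - qq p (max (j - 1) (bG E (i - 1)))) / qq p (bG E (i - 1))

/-- `Γ^G_{i,j}`. -/
def GammaG (p : ℕ → ℝ) (E : Finset (ℕ × ℕ)) (i j : ℕ) : ℝ := GammaPath E (gammaG p E) i j

/-- `z_1^G (a, p)`. -/
def z1G (N : ℕ) (a p : ℕ → ℝ) (E : Finset (ℕ × ℕ)) : ℝ :=
  (∑ j ∈ Finset.Icc 1 N, GammaG p E 1 j * dpar a j / qq p (bG E (j - 1))) /
  (1 + ∑ j ∈ Finset.Icc 1 N,
      GammaG p E 1 j * (qq p (bG E j) - qq p (bG E (j - 1))) / qq p (bG E (j - 1)))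

/-- `z_i^G (a, p)`. -/
def zG (N : ℕ) (a p : ℕ → ℝ) (E : Finset (ℕ × ℕ)) (i : ℕ) : ℝ :=
  if i = 1 then z1G N a p E
  else
    (∑ j ∈ Finset.Icc i N, GammaG p E i j * dpar a j / qq p (bG E (j - 1))) -
      z1G N a p E *
        ∑ j ∈ Finset.Icc i N,
          GammaG p E i j * (qq p (bG E j) - qq p (bG E (j - 1))) / qq p (bG E (j - 1))

/-- `Z^G_{i,j} (a, p) = z_{i+1}^G + ... + z_j^G`. -/
def ZG (N : ℕ) (a p : ℕ → ℝ) (E : Finset (ℕ × ℕ)) (i j : ℕ) : ℝ :=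
  ∑ l ∈ Finset.Icc (i + 1) j, zG N a p E l

/-- The DC graph `Gr(a, p)` read off from the stationary tuple `s = s(a, p)`: its edges are
the pairs `(i, j) ∈ E_N` with `s 1 > s j - s i`. -/
def GrEdges (N : ℕ) (s : ℕ → ℝ) : Finset (ℕ × ℕ) :=
  (ENfin N).filter fun e => s e.2 - s e.1 < s 1

/-- `ζ` solves the linear system `S^G (a, p)`. -/
def SolvesS (N : ℕ) (a p : ℕ → ℝ) (E : Finset (ℕ × ℕ)) (ζ : ℕ → ℝ) : Prop :=
  ∀ i, 1 ≤ i → i ≤ N →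
    a i = ∑ j ∈ Finset.Icc 1 (bG E i),
      p j * ((∑ l ∈ Finset.Icc 1 i, ζ l) - (∑ l ∈ Finset.Icc 1 j, ζ l) + ζ 1)

/-- `P^{2N}`, viewed as a (cylinder) subset of the space of pairs of real sequences; only the
coordinates `a 1, ..., a N, p 1, ..., p N` are constrained. -/
def Pset (N : ℕ) : Set ((ℕ → ℝ) × (ℕ → ℝ)) := {ap | IsParam N ap.1 ap.2}

/-- The region `P_G = {(a, p) ∈ P^{2N} : Gr(a, p) = G}`. -/
def PGset (N : ℕ) (E : Finset (ℕ × ℕ)) : Set ((ℕ → ℝ) × (ℕ → ℝ)) :=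
  {ap | IsParam N ap.1 ap.2 ∧ ∃ s : ℕ → ℝ, IsStatTuple N ap.1 ap.2 s ∧ GrEdges N s = E}

/-- The boundary of `P_G` relative to `P^{2N}`.  Since `P^{2N}` is open, the closure of `P_G`
relative to `P^{2N}` is `closure (PGset N E) ∩ Pset N` and its relative interior is
`interior (PGset N E)`. -/
def relBoundary (N : ℕ) (E : Finset (ℕ × ℕ)) : Set ((ℕ → ℝ) × (ℕ → ℝ)) :=
  (closure (PGset N E) ∩ Pset N) \ interior (PGset N E)

/-- The trajectory `y^{(m)}` built from a tuple `s`: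
`t ↦ ∑_{j=1}^N p j * (t - s j + s 1)₊`. -/
def trajOfS (N : ℕ) (p s : ℕ → ℝ) : ℝ → ℝ :=
  fun t => ∑ j ∈ Finset.Icc 1 N, p j * pos' (t - s j + s 1)

/-- The DC graph `G^{(m)}` associated with a tuple `s`: its edges are the `(i, j) ∈ E_N` with
`t^{(m)} (a i) - s j + s 1 > 0`, where `t^{(m)}` is the inverse of `trajOfS N p s`. -/
def GrFromS (N : ℕ) (a p s : ℕ → ℝ) : Finset (ℕ × ℕ) :=
  (ENfin N).filter fun e => 0 < tinv (trajOfS N p s) (a e.1) - s e.2 + s 1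

end
section Stmt9Aux

open Finset

/-- `zfun s i` is the increment `s i - s (i-1)` with the convention `s 0 = 0`. -/
noncomputable def zfun (s : ℕ → ℝ) (l : ℕ) : ℝ := if l = 1 then s 1 else s l - s (l - 1)

/-- the inhomogeneous term of the recursion. -/
noncomputable def wG (a p : ℕ → ℝ) (E : Finset (ℕ × ℕ)) (c : ℝ) (j : ℕ) : ℝ :=
  dpar a j / qq p (bG E (j - 1)) -
    c * ((qq p (bG E j) - qq p (bG E (j - 1))) / qq p (bG E (j - 1)))

lemma Icc_one_eq_Ioc (n : ℕ) : Finset.Icc 1 n = Finset.Ioc 0 n := by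
  ext x; simp [Finset.mem_Icc, Finset.mem_Ioc]; omega

lemma qq_diff (p : ℕ → ℝ) {m k : ℕ} (h : m ≤ k) :
    qq p k - qq p m = ∑ j ∈ Finset.Ioc m k, p j := by
  unfold qq
  rw [Icc_one_eq_Ioc, Icc_one_eq_Ioc, ← Finset.sum_Ioc_consecutive p (Nat.zero_le m) h]
  ring

lemma qq_pos {N : ℕ} {p : ℕ → ℝ} (hp : ∀ i, 1 ≤ i → i ≤ N → 0 < p i)
    {k : ℕ} (hk : 1 ≤ k) (hkN : k ≤ N) : 0 < qq p k := by
  apply Finset.sum_pos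
  · intro j hj
    simp only [Finset.mem_Icc] at hj
    exact hp j hj.1 (le_trans hj.2 hkN)
  · exact ⟨1, Finset.mem_Icc.mpr ⟨le_refl 1, hk⟩⟩

lemma qq_mono {N : ℕ} {p : ℕ → ℝ} (hp : ∀ i, 1 ≤ i → i ≤ N → 0 < p i)
    {m k : ℕ} (h : m ≤ k) (hkN : k ≤ N) : qq p m ≤ qq p k := by
  have h1 := qq_diff p h
  have h2 : 0 ≤ ∑ j ∈ Finset.Ioc m k, p j := by
    apply Finset.sum_nonneg
    intro j hj
    simp only [Finset.mem_Ioc] at hj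
    exact (hp j (by omega) (le_trans hj.2 hkN)).le
  linarith

lemma le_bG (E : Finset (ℕ × ℕ)) (i : ℕ) : i ≤ bG E i := by
  unfold bG
  split
  · omega
  · exact le_max_left _ _

lemma one_le_bG (E : Finset (ℕ × ℕ)) (i : ℕ) : 1 ≤ bG E i := by
  unfold bG
  split
  · exact le_refl 1
  · next h => exact le_trans (Nat.one_le_iff_ne_zero.mpr h) (le_max_left _ _)

lemma mem_ENfin {N : ℕ} {e : ℕ × ℕ} :
    e ∈ ENfin N ↔ 1 ≤ e.1 ∧ e.1 ≤ N ∧ 1 ≤ e.2 ∧ e.2 ≤ N ∧ e.1 < e.2 := by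
  unfold ENfin
  simp only [Finset.mem_filter, Finset.mem_product, Finset.mem_Icc]
  tauto

lemma bG_le {N : ℕ} {E : Finset (ℕ × ℕ)} (hE : IsDCGraph N E) (hN : 1 ≤ N)
    {i : ℕ} (hiN : i ≤ N) : bG E i ≤ N := by
  unfold bG
  split
  · exact hN
  · apply max_le hiN
    apply Finset.sup_le
    intro e he
    simp only [Finset.mem_filter] at he
    exact (mem_ENfin.mp (hE.1 he.1)).2.2.2.1

lemma edge_le_bG {N : ℕ} {E : Finset (ℕ × ℕ)} (hE : IsDCGraph N E) {i l : ℕ}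
    (h : (i, l) ∈ E) : l ≤ bG E i := by
  have hmem := mem_ENfin.mp (hE.1 h)
  simp only at hmem
  unfold bG
  rw [if_neg (by omega)]
  refine le_trans ?_ (le_max_right _ _)
  have hmem2 : (i, l) ∈ E.filter (fun e => e.1 = i) := Finset.mem_filter.mpr ⟨h, rfl⟩
  exact Finset.le_sup (f := fun e => e.2) hmem2

lemma edge_of_le_bG {N : ℕ} {E : Finset (ℕ × ℕ)} (hE : IsDCGraph N E) {i l : ℕ}
    (hi : 1 ≤ i) (hil : i < l) (h : l ≤ bG E i) : (i, l) ∈ E := by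
  unfold bG at h
  rw [if_neg (by omega)] at h
  have hl : l ≤ (E.filter fun e => e.1 = i).sup fun e => e.2 := by
    rcases le_max_iff.mp h with h' | h'
    · omega
    · exact h'
  rcases Finset.eq_empty_or_nonempty (E.filter fun e => e.1 = i) with he | hne
  · rw [he] at hl
    simp at hl
    omega
  · obtain ⟨e, hef, hsup⟩ := Finset.exists_mem_eq_sup _ hne (fun e => e.2)
    rw [hsup] at hl
    simp only [Finset.mem_filter] at hef
    exact hE.2 e hef.1 (i, l) ⟨le_of_eq hef.2, hil, hl⟩

lemma bG_pred_le {N : ℕ} {E : Finset (ℕ × ℕ)} (hE : IsDCGraph N E) {i : ℕ}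
    (hi : 1 ≤ i) : bG E (i - 1) ≤ bG E i := by
  by_cases hi1 : i = 1
  · subst hi1
    have h0 : bG E (1 - 1) = 1 := by norm_num [bG]
    rw [h0]
    exact one_le_bG E 1
  · by_cases hb : bG E (i - 1) ≤ i
    · exact le_trans hb (le_bG E i)
    · push_neg at hb
      have hedge : (i - 1, bG E (i - 1)) ∈ E :=
        edge_of_le_bG hE (by omega) (by omega) le_rfl
      have hedge2 : (i, bG E (i - 1)) ∈ E :=
        hE.2 _ hedge (i, bG E (i - 1)) ⟨by omega, hb, le_rfl⟩
      exact edge_le_bG hE hedge2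

lemma s_lt {N : ℕ} {a p s : ℕ → ℝ} (hs : IsStatTuple N a p s) {j i : ℕ}
    (hj : 1 ≤ j) (hji : j < i) (hiN : i ≤ N) : s j < s i := by
  revert hiN
  induction i, hji using Nat.le_induction with
  | base => exact fun h => hs.2.1 j hj (by omega)
  | succ n hn ih =>
    intro h
    exact lt_trans (ih (by omega)) (hs.2.1 n (by omega) (by omega))

lemma s_le {N : ℕ} {a p s : ℕ → ℝ} (hs : IsStatTuple N a p s) {j i : ℕ}
    (hj : 1 ≤ j) (hji : j ≤ i) (hiN : i ≤ N) : s j ≤ s i := by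
  rcases Nat.eq_or_lt_of_le hji with h | h
  · rw [h]
  · exact (s_lt hs hj h hiN).le

lemma telescope (f : ℕ → ℝ) {i j : ℕ} (h : i ≤ j) :
    ∑ l ∈ Finset.Ioc i j, (f l - f (l - 1)) = f j - f i := by
  induction j, h using Nat.le_induction with
  | base => simp
  | succ n hn ih =>
    rw [← Finset.sum_Ioc_consecutive _ hn (Nat.le_succ n), ih]
    simp

lemma stat_trunc {N : ℕ} {a p s : ℕ → ℝ} {E : Finset (ℕ × ℕ)} (hE : IsDCGraph N E)
    (hs : IsStatTuple N a p s) (hPG : GrEdges N s = E) (hN : 1 ≤ N)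
    {i : ℕ} (hi : 1 ≤ i) (hiN : i ≤ N) :
    a i = ∑ j ∈ Finset.Icc 1 (bG E i), p j * (s i - s j + s 1) := by
  have hbi := le_bG E i
  have hbN : bG E i ≤ N := bG_le hE hN hiN
  rw [hs.2.2 i hi hiN, Icc_one_eq_Ioc, Icc_one_eq_Ioc,
    ← Finset.sum_Ioc_consecutive _ (Nat.zero_le (bG E i)) hbN]
  have h2 : ∑ j ∈ Finset.Ioc (bG E i) N, p j * pos' (s i - s j + s 1) = 0 := by
    apply Finset.sum_eq_zero
    intro j hj
    simp only [Finset.mem_Ioc] at hj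
    have hij : i < j := by omega
    have hnotE : (i, j) ∉ E := fun h => absurd (edge_le_bG hE h) (by omega)
    rw [← hPG] at hnotE
    unfold GrEdges at hnotE
    simp only [Finset.mem_filter] at hnotE
    have hEN : (i, j) ∈ ENfin N := mem_ENfin.mpr ⟨hi, hiN, by omega, hj.2, hij⟩
    have hlt : ¬ (s j - s i < s 1) := fun h => hnotE ⟨hEN, h⟩
    have hle : s i - s j + s 1 ≤ 0 := by push_neg at hlt; linarith
    rw [show pos' (s i - s j + s 1) = 0 from max_eq_right hle, mul_zero]
  rw [h2, add_zero]
  apply Finset.sum_congr rfl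
  intro j hj
  simp only [Finset.mem_Ioc] at hj
  have hpos : 0 < s i - s j + s 1 := by
    rcases le_or_gt j i with h | h
    · have := s_le hs (by omega) h hiN
      linarith [hs.1]
    · have hedge : (i, j) ∈ E := edge_of_le_bG hE hi h hj.2
      rw [← hPG] at hedge
      unfold GrEdges at hedge
      simp only [Finset.mem_filter] at hedge
      linarith [hedge.2]
  rw [show pos' (s i - s j + s 1) = s i - s j + s 1 from max_eq_left hpos.le]

lemma keyEq {N : ℕ} {a p s : ℕ → ℝ} {E : Finset (ℕ × ℕ)}
    (hE : IsDCGraph N E) (hs : IsStatTuple N a p s)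
    (hPG : GrEdges N s = E) (hN : 1 ≤ N) {i : ℕ} (hi : 1 ≤ i) (hiN : i ≤ N) :
    dpar a i = qq p (bG E (i - 1)) * zfun s i
      + ∑ j ∈ Finset.Ioc (bG E (i - 1)) (bG E i), p j * (s i - s j + s 1) := by
  by_cases hi1 : i = 1
  · subst hi1
    have hb0 : bG E (1 - 1) = 1 := by norm_num [bG]
    rw [hb0, dpar, if_pos rfl, stat_trunc hE hs hPG hN le_rfl hN]
    rw [Icc_one_eq_Ioc, ← Finset.sum_Ioc_consecutive _ (Nat.zero_le 1) (one_le_bG E 1)]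
    congr 1
    rw [show Finset.Ioc 0 1 = {1} from by ext x; simp; try omega]
    rw [Finset.sum_singleton]
    unfold qq zfun
    rw [Finset.Icc_self, Finset.sum_singleton, if_pos rfl]
    ring
  · have hmono := bG_pred_le hE hi
    have h1 := stat_trunc hE hs hPG hN hi hiN
    have h0 := stat_trunc hE hs hPG hN (show 1 ≤ i - 1 by omega) (show i - 1 ≤ N by omega)
    rw [dpar, if_neg hi1, h1, h0, Icc_one_eq_Ioc, Icc_one_eq_Ioc,
      ← Finset.sum_Ioc_consecutive _ (Nat.zero_le (bG E (i - 1))) hmono]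
    have hq : qq p (bG E (i - 1)) * zfun s i
        = ∑ j ∈ Finset.Ioc 0 (bG E (i - 1)),
            (p j * (s i - s j + s 1) - p j * (s (i - 1) - s j + s 1)) := by
      rw [qq, Icc_one_eq_Ioc, Finset.sum_mul]
      apply Finset.sum_congr rfl
      intro j hj
      simp only [zfun, if_neg hi1]
      ring
    rw [Finset.sum_sub_distrib] at hq
    linarith

lemma zrec {N : ℕ} {a p s : ℕ → ℝ} {E : Finset (ℕ × ℕ)}
    (hap : IsParam N a p) (hE : IsDCGraph N E) (hs : IsStatTuple N a p s)
    (hPG : GrEdges N s = E) (hN : 1 ≤ N) {i : ℕ} (hi : 1 ≤ i) (hiN : i ≤ N) :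
    zfun s i = wG a p E (s 1) i
      + ∑ l ∈ Finset.Ioc i N,
          (if (i, l) ∈ E then gammaG p E i l * zfun s l else 0) := by
  have hp := hap.2.2
  have hb1 : 1 ≤ bG E (i - 1) := one_le_bG E _
  have hbmono : bG E (i - 1) ≤ bG E i := bG_pred_le hE hi
  have hbN : bG E i ≤ N := bG_le hE hN hiN
  have hbi : i ≤ bG E i := le_bG E i
  have hb'i : i - 1 ≤ bG E (i - 1) := le_bG E (i - 1)
  have hq' : (0 : ℝ) < qq p (bG E (i - 1)) := qq_pos hp hb1 (le_trans hbmono hbN)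
  have key0 := keyEq hE hs hPG hN hi hiN
  have hsum1 : ∑ j ∈ Finset.Ioc (bG E (i - 1)) (bG E i), p j * (s i - s j + s 1)
      = (qq p (bG E i) - qq p (bG E (i - 1))) * s 1
        - ∑ l ∈ Finset.Ioc i (bG E i),
            (qq p (bG E i) - qq p (max (l - 1) (bG E (i - 1)))) * zfun s l := by
    have hstep : ∀ j ∈ Finset.Ioc (bG E (i - 1)) (bG E i),
        p j * (s i - s j + s 1)
          = p j * s 1 - ∑ l ∈ Finset.Ioc i j, p j * zfun s l := by
      intro j hj
      rw [Finset.mem_Ioc] at hj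
      have hij : i ≤ j := by omega
      have htel : ∑ l ∈ Finset.Ioc i j, zfun s l = s j - s i := by
        have hzz : ∀ l ∈ Finset.Ioc i j, zfun s l = s l - s (l - 1) := by
          intro l hl
          rw [Finset.mem_Ioc] at hl
          unfold zfun
          rw [if_neg (by omega)]
        rw [Finset.sum_congr rfl hzz]
        exact telescope s hij
      rw [← Finset.mul_sum, htel]
      ring
    rw [Finset.sum_congr rfl hstep, Finset.sum_sub_distrib]
    congr 1
    · rw [qq_diff p hbmono, Finset.sum_mul]
    · have hswap : ∀ (x y : ℕ),
          x ∈ Finset.Ioc (bG E (i - 1)) (bG E i) ∧ y ∈ Finset.Ioc i x ↔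
          x ∈ Finset.Ioc (max (y - 1) (bG E (i - 1))) (bG E i) ∧ y ∈ Finset.Ioc i (bG E i) := by
        intro x y
        simp only [Finset.mem_Ioc]
        omega
      rw [Finset.sum_comm' hswap]
      apply Finset.sum_congr rfl
      intro l hl
      rw [Finset.mem_Ioc] at hl
      rw [qq_diff p (max_le (by omega) hbmono), Finset.sum_mul]
  rw [hsum1] at key0
  have hedge_split : ∑ l ∈ Finset.Ioc i N,
        (if (i, l) ∈ E then gammaG p E i l * zfun s l else 0)
      = (∑ l ∈ Finset.Ioc i (bG E i),
          (qq p (bG E i) - qq p (max (l - 1) (bG E (i - 1)))) * zfun s l)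
        / qq p (bG E (i - 1)) := by
    rw [← Finset.sum_Ioc_consecutive _ hbi hbN]
    have h2 : ∑ l ∈ Finset.Ioc (bG E i) N,
        (if (i, l) ∈ E then gammaG p E i l * zfun s l else 0) = 0 :=
      Finset.sum_eq_zero fun l hl => by
        rw [Finset.mem_Ioc] at hl
        rw [if_neg (fun h => absurd (edge_le_bG hE h) (by omega))]
    rw [h2, add_zero, Finset.sum_div]
    apply Finset.sum_congr rfl
    intro l hl
    rw [Finset.mem_Ioc] at hl
    rw [if_pos (edge_of_le_bG hE hi hl.1 hl.2)]
    unfold gammaG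
    ring
  rw [hedge_split]
  unfold wG
  field_simp
  nlinarith [key0]

end Stmt9Aux
section Stmt9Gamma

open Finset

lemma pathProd_nil (γ : ℕ → ℕ → ℝ) : pathProd γ [] = 1 := rfl

lemma pathProd_single (γ : ℕ → ℕ → ℝ) (a : ℕ) : pathProd γ [a] = 1 := rfl

lemma pathProd_cons (γ : ℕ → ℕ → ℝ) (a b : ℕ) (t : List ℕ) :
    pathProd γ (a :: b :: t) = γ a b * pathProd γ (b :: t) := by
  simp [pathProd]

lemma pathProd_pair (γ : ℕ → ℕ → ℝ) (a b : ℕ) : pathProd γ [a, b] = γ a b := by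
  rw [pathProd_cons, pathProd_single, mul_one]

lemma chain'_cons_nat {R : ℕ → ℕ → Prop} {a b : ℕ} {l : List ℕ} :
    List.Chain' R (a :: b :: l) ↔ R a b ∧ List.Chain' R (b :: l) := List.isChain_cons_cons

lemma chain'_pair_nat {R : ℕ → ℕ → Prop} {a b : ℕ} :
    List.Chain' R [a, b] ↔ R a b := List.isChain_pair

lemma sort_insert_min {x : ℕ} {T : Finset ℕ} (h : ∀ b ∈ T, x < b) :
    Finset.sort (insert x T) (· ≤ ·) = x :: Finset.sort T (· ≤ ·) :=
  Finset.sort_insert _ (fun b hb => (h b hb).le) (fun hx => lt_irrefl x (h x hx))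

lemma GammaPath_self (E : Finset (ℕ × ℕ)) (γ : ℕ → ℕ → ℝ) (i : ℕ) :
    GammaPath E γ i i = 1 := by
  unfold GammaPath
  rw [if_pos rfl]

lemma GammaPath_of_lt (E : Finset (ℕ × ℕ)) (γ : ℕ → ℕ → ℝ) {i j : ℕ} (hij : i < j) :
    GammaPath E γ i j
      = ∑ S ∈ (Finset.Ioo i j).powerset,
          if List.Chain' (fun u v => (u, v) ∈ E)
              (Finset.sort (insert i (insert j S)) (· ≤ ·))
          then pathProd γ (Finset.sort (insert i (insert j S)) (· ≤ ·)) else 0 := by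
  unfold GammaPath
  rw [if_neg (by omega), if_pos hij]

lemma GammaPath_rec (E : Finset (ℕ × ℕ)) (γ : ℕ → ℕ → ℝ) {i j : ℕ} (hij : i < j) :
    GammaPath E γ i j
      = ∑ l ∈ Finset.Ioc i j,
          (if (i, l) ∈ E then γ i l * GammaPath E γ l j else 0) := by
  classical
  rw [GammaPath_of_lt E γ hij]
  set F : Finset ℕ → ℝ := fun S =>
    if List.Chain' (fun u v => (u, v) ∈ E)
        (Finset.sort (insert i (insert j S)) (· ≤ ·))
    then pathProd γ (Finset.sort (insert i (insert j S)) (· ≤ ·)) else 0 with hF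
  have claim : ∀ (l : ℕ) (S' : Finset ℕ), i < l → l < j → S' ⊆ Finset.Ioo l j →
      F (insert l S') = (if (i, l) ∈ E then γ i l *
        (if List.Chain' (fun u v => (u, v) ∈ E)
            (Finset.sort (insert l (insert j S')) (· ≤ ·))
         then pathProd γ (Finset.sort (insert l (insert j S')) (· ≤ ·)) else 0) else 0) := by
    intro l S' hil hlj hS'
    have hsort2 : Finset.sort (insert l (insert j S')) (· ≤ ·)
        = l :: Finset.sort (insert j S') (· ≤ ·) := by
      apply sort_insert_min
      intro b hb
      rcases Finset.mem_insert.mp hb with h | h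
      · omega
      · exact (Finset.mem_Ioo.mp (hS' h)).1
    have hsort1 : Finset.sort (insert i (insert j (insert l S'))) (· ≤ ·)
        = i :: l :: Finset.sort (insert j S') (· ≤ ·) := by
      rw [Finset.insert_comm j l S']
      rw [sort_insert_min (fun b hb => by
        rcases Finset.mem_insert.mp hb with h | h
        · omega
        · rcases Finset.mem_insert.mp h with h' | h'
          · omega
          · have := (Finset.mem_Ioo.mp (hS' h')).1
            omega)]
      rw [hsort2]
    rw [hF]
    simp only [hsort1, hsort2, chain'_cons_nat, pathProd_cons]
    by_cases h1 : (i, l) ∈ E <;>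
      by_cases h2 : List.Chain' (fun u v => (u, v) ∈ E)
        (l :: Finset.sort (insert j S') (· ≤ ·)) <;>
      simp [h1, h2]
  have hmem0 : (∅ : Finset ℕ) ∈ (Finset.Ioo i j).powerset := Finset.empty_mem_powerset _
  rw [← Finset.add_sum_erase _ F hmem0]
  rw [← Finset.Ioo_insert_right hij, Finset.sum_insert (by simp)]
  have heq1 : F ∅ = (if (i, j) ∈ E then γ i j * GammaPath E γ j j else 0) := by
    have hs0 : Finset.sort (insert i (insert j (∅ : Finset ℕ))) (· ≤ ·) = [i, j] := by
      rw [show insert j (∅ : Finset ℕ) = {j} from rfl]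
      rw [sort_insert_min (fun b hb => by simp at hb; omega)]
      rw [Finset.sort_singleton]
    rw [hF]
    simp only [hs0, chain'_pair_nat, pathProd_pair, GammaPath_self, mul_one]
  have heq2 : ∑ S ∈ (Finset.Ioo i j).powerset.erase ∅, F S
      = ∑ l ∈ Finset.Ioo i j, (if (i, l) ∈ E then γ i l * GammaPath E γ l j else 0) := by
    have hrhs : ∀ l ∈ Finset.Ioo i j,
        (if (i, l) ∈ E then γ i l * GammaPath E γ l j else 0)
        = ∑ S ∈ (Finset.Ioo l j).powerset,
            (if (i, l) ∈ E then γ i l *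
              (if List.Chain' (fun u v => (u, v) ∈ E)
                  (Finset.sort (insert l (insert j S)) (· ≤ ·))
               then pathProd γ (Finset.sort (insert l (insert j S)) (· ≤ ·)) else 0) else 0) := by
      intro l hl
      rw [Finset.mem_Ioo] at hl
      by_cases he : (i, l) ∈ E
      · rw [if_pos he, GammaPath_of_lt E γ hl.2, Finset.mul_sum]
        exact Finset.sum_congr rfl fun S hS => by rw [if_pos he]
      · rw [if_neg he]
        exact (Finset.sum_eq_zero fun S hS => by rw [if_neg he]).symm
    have hbij : ∑ S ∈ (Finset.Ioo i j).powerset.erase ∅, F S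
        = ∑ x ∈ (Finset.Ioo i j).sigma (fun l => (Finset.Ioo l j).powerset),
            (if (i, x.1) ∈ E then γ i x.1 *
              (if List.Chain' (fun u v => (u, v) ∈ E)
                  (Finset.sort (insert x.1 (insert j x.2)) (· ≤ ·))
               then pathProd γ (Finset.sort (insert x.1 (insert j x.2)) (· ≤ ·)) else 0)
             else 0) := by
      refine Finset.sum_bij'
        (fun S hS =>
          (⟨S.min' (Finset.nonempty_of_ne_empty (Finset.ne_of_mem_erase hS)),
            S.erase (S.min' (Finset.nonempty_of_ne_empty (Finset.ne_of_mem_erase hS)))⟩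
            : (_ : ℕ) × Finset ℕ))
        (fun x _ => insert x.1 x.2) ?_ ?_ ?_ ?_ ?_
      · -- hi : lands in sigma
        intro S hS
        have hne : S.Nonempty := Finset.nonempty_of_ne_empty (Finset.ne_of_mem_erase hS)
        have hsub : S ⊆ Finset.Ioo i j :=
          Finset.mem_powerset.mp (Finset.mem_of_mem_erase hS)
        have hmin := S.min'_mem hne
        rw [Finset.mem_sigma]
        constructor
        · exact hsub hmin
        · rw [Finset.mem_powerset]
          intro x hx
          rcases Finset.mem_erase.mp hx with ⟨hxne, hxS⟩
          rw [Finset.mem_Ioo]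
          exact ⟨lt_of_le_of_ne (S.min'_le x hxS) (Ne.symm hxne),
            (Finset.mem_Ioo.mp (hsub hxS)).2⟩
      · -- hj : insert lands in erase
        intro x hx
        rw [Finset.mem_sigma] at hx
        rw [Finset.mem_erase]
        constructor
        · exact Finset.insert_ne_empty _ _
        · rw [Finset.mem_powerset]
          intro y hy
          rcases Finset.mem_insert.mp hy with h | h
          · rw [h]; exact hx.1
          · have h1 := Finset.mem_Ioo.mp (Finset.mem_powerset.mp hx.2 h)
            have h2 := Finset.mem_Ioo.mp hx.1
            rw [Finset.mem_Ioo]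
            omega
      · -- left inverse
        intro S hS
        exact Finset.insert_erase
          (S.min'_mem (Finset.nonempty_of_ne_empty (Finset.ne_of_mem_erase hS)))
      · -- right inverse
        intro x hx
        obtain ⟨l, S'⟩ := x
        rw [Finset.mem_sigma] at hx
        have hS' : S' ⊆ Finset.Ioo l j := Finset.mem_powerset.mp hx.2
        have hlnot : l ∉ S' := fun h => lt_irrefl l (Finset.mem_Ioo.mp (hS' h)).1
        have hmin : (insert l S').min' (Finset.insert_nonempty _ _) = l := by
          apply le_antisymm
          · exact Finset.min'_le _ _ (Finset.mem_insert_self l S')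
          · apply Finset.le_min'
            intro y hy
            rcases Finset.mem_insert.mp hy with h | h
            · omega
            · exact (Finset.mem_Ioo.mp (hS' h)).1.le
        simp only [hmin]
        rw [Finset.erase_insert hlnot]
      · -- values agree
        intro S hS
        have hne : S.Nonempty := Finset.nonempty_of_ne_empty (Finset.ne_of_mem_erase hS)
        have hsub : S ⊆ Finset.Ioo i j :=
          Finset.mem_powerset.mp (Finset.mem_of_mem_erase hS)
        have hmin := S.min'_mem hne
        have hbounds := Finset.mem_Ioo.mp (hsub hmin)
        have hS' : S.erase (S.min' hne) ⊆ Finset.Ioo (S.min' hne) j := by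
          intro x hx
          rcases Finset.mem_erase.mp hx with ⟨hxne, hxS⟩
          rw [Finset.mem_Ioo]
          exact ⟨lt_of_le_of_ne (S.min'_le x hxS) (Ne.symm hxne),
            (Finset.mem_Ioo.mp (hsub hxS)).2⟩
        have hins : insert (S.min' hne) (S.erase (S.min' hne)) = S :=
          Finset.insert_erase hmin
        calc F S = F (insert (S.min' hne) (S.erase (S.min' hne))) := by rw [hins]
          _ = _ := claim _ _ hbounds.1 hbounds.2 hS'
    rw [Finset.sum_congr rfl hrhs, Finset.sum_sigma']
    exact hbij
  rw [heq1, heq2]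

lemma pathProd_nonneg {E : Finset (ℕ × ℕ)} {γ : ℕ → ℕ → ℝ}
    (hγ : ∀ u v, (u, v) ∈ E → 0 ≤ γ u v) :
    ∀ L : List ℕ, List.Chain' (fun u v => (u, v) ∈ E) L → 0 ≤ pathProd γ L := by
  intro L
  induction L with
  | nil => intro _; rw [pathProd_nil]; norm_num
  | cons a t ih =>
    intro h
    cases t with
    | nil => rw [pathProd_single]; norm_num
    | cons b t' =>
      rw [pathProd_cons]
      rw [chain'_cons_nat] at h
      exact mul_nonneg (hγ _ _ h.1) (ih h.2)

lemma GammaPath_nonneg {E : Finset (ℕ × ℕ)} {γ : ℕ → ℕ → ℝ}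
    (hγ : ∀ u v, (u, v) ∈ E → 0 ≤ γ u v) (i j : ℕ) :
    0 ≤ GammaPath E γ i j := by
  unfold GammaPath
  split
  · norm_num
  · split
    · apply Finset.sum_nonneg
      intro S hS
      split
      · next h => exact pathProd_nonneg hγ _ h
      · exact le_refl 0
    · exact le_refl 0

end Stmt9Gamma
section Stmt9Final

open Finset

lemma gammaG_nonneg {N : ℕ} {p : ℕ → ℝ} (hp : ∀ i, 1 ≤ i → i ≤ N → 0 < p i)
    {E : Finset (ℕ × ℕ)} (hE : IsDCGraph N E) (hN : 1 ≤ N)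
    {u v : ℕ} (h : (u, v) ∈ E) : 0 ≤ gammaG p E u v := by
  have hm := mem_ENfin.mp (hE.1 h)
  simp only at hm
  have hbu : v ≤ bG E u := edge_le_bG hE h
  have hbuN : bG E u ≤ N := bG_le hE hN hm.2.1
  have hb' : bG E (u - 1) ≤ bG E u := bG_pred_le hE hm.1
  have h1b' : 1 ≤ bG E (u - 1) := one_le_bG E _
  unfold gammaG
  apply div_nonneg
  · have hle : max (v - 1) (bG E (u - 1)) ≤ bG E u := max_le (by omega) hb'
    linarith [qq_mono hp hle hbuN]
  · exact (qq_pos hp h1b' (le_trans hb' hbuN)).le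

lemma dpar_nonneg {N : ℕ} {a p : ℕ → ℝ} (hap : IsParam N a p) {j : ℕ}
    (hj : 1 ≤ j) (hjN : j ≤ N) : 0 ≤ dpar a j := by
  unfold dpar
  split
  · exact hap.1.le
  · next h =>
    have := hap.2.1 (j - 1) (by omega) (by omega)
    rw [show j - 1 + 1 = j by omega] at this
    linarith

lemma split_sum (a p : ℕ → ℝ) (E : Finset (ℕ × ℕ)) (c : ℝ) (F : Finset ℕ) (i : ℕ) :
    ∑ j ∈ F, GammaG p E i j * wG a p E c j
    = (∑ j ∈ F, GammaG p E i j * dpar a j / qq p (bG E (j - 1)))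
      - c * ∑ j ∈ F, GammaG p E i j * (qq p (bG E j) - qq p (bG E (j - 1))) / qq p (bG E (j - 1)) := by
  rw [Finset.mul_sum, ← Finset.sum_sub_distrib]
  apply Finset.sum_congr rfl
  intro j _
  unfold wG
  ring

lemma main_formula {N : ℕ} {a p s : ℕ → ℝ} {E : Finset (ℕ × ℕ)}
    (hap : IsParam N a p) (hE : IsDCGraph N E) (hs : IsStatTuple N a p s)
    (hPG : GrEdges N s = E) (hN : 1 ≤ N) :
    ∀ i, 1 ≤ i → i ≤ N →
      zfun s i = ∑ j ∈ Finset.Icc i N, GammaG p E i j * wG a p E (s 1) j := by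
  suffices H : ∀ m i, 1 ≤ i → i ≤ N → N - i ≤ m →
      zfun s i = ∑ j ∈ Finset.Icc i N, GammaG p E i j * wG a p E (s 1) j from
    fun i hi hiN => H (N - i) i hi hiN le_rfl
  intro m
  induction m with
  | zero =>
    intro i hi hiN hm
    have hiN' : i = N := by omega
    subst hiN'
    rw [zrec hap hE hs hPG hN hi hiN]
    rw [Finset.Ioc_self, Finset.sum_empty, add_zero, Finset.Icc_self, Finset.sum_singleton]
    rw [GammaG, GammaPath_self, one_mul]
  | succ m ih =>
    intro i hi hiN hm
    rw [zrec hap hE hs hPG hN hi hiN]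
    have hstep : ∀ l ∈ Finset.Ioc i N,
        (if (i, l) ∈ E then gammaG p E i l * zfun s l else 0)
        = ∑ j ∈ Finset.Icc l N,
            (if (i, l) ∈ E then gammaG p E i l * (GammaG p E l j * wG a p E (s 1) j) else 0) := by
      intro l hl
      rw [Finset.mem_Ioc] at hl
      by_cases he : (i, l) ∈ E
      · rw [if_pos he, ih l (by omega) hl.2 (by omega), Finset.mul_sum]
        exact Finset.sum_congr rfl fun j hj => by rw [if_pos he]
      · rw [if_neg he]
        exact (Finset.sum_eq_zero fun j hj => by rw [if_neg he]).symm
    rw [Finset.sum_congr rfl hstep]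
    have hswap : ∀ (x y : ℕ),
        x ∈ Finset.Ioc i N ∧ y ∈ Finset.Icc x N ↔
        x ∈ Finset.Ioc i y ∧ y ∈ Finset.Ioc i N := by
      intro x y
      simp only [Finset.mem_Ioc, Finset.mem_Icc]
      omega
    rw [Finset.sum_comm' hswap]
    have hinner : ∀ j ∈ Finset.Ioc i N,
        (∑ l ∈ Finset.Ioc i j,
          if (i, l) ∈ E then gammaG p E i l * (GammaG p E l j * wG a p E (s 1) j) else 0)
        = GammaG p E i j * wG a p E (s 1) j := by
      intro j hj
      rw [Finset.mem_Ioc] at hj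
      rw [GammaG, GammaPath_rec E _ hj.1, Finset.sum_mul]
      apply Finset.sum_congr rfl
      intro l hl
      by_cases he : (i, l) ∈ E
      · rw [if_pos he, if_pos he, GammaG]
        ring
      · rw [if_neg he, if_neg he, zero_mul]
    rw [Finset.sum_congr rfl hinner]
    rw [← Finset.Ioc_insert_left hiN, Finset.sum_insert (by simp)]
    rw [GammaG, GammaPath_self, one_mul]

end Stmt9Final
/-- formula for the increments of the stationary tuple and for the front speed
on the region `P_G`, Theorems 1.2 and 4.4. -/
theorem stmt_9 (N : ℕ) (hN : 1 ≤ N) (a p : ℕ → ℝ) (hap : IsParam N a p)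
    (E : Finset (ℕ × ℕ)) (hE : IsDCGraph N E)
    (s : ℕ → ℝ) (hs : IsStatTuple N a p s) (hPG : GrEdges N s = E) :
    (∀ i, 1 ≤ i → i ≤ N → s i - (if i = 1 then 0 else s (i - 1)) = zG N a p E i) ∧
    1 / s 1 =
      (1 + ∑ j ∈ Finset.Icc 1 N,
          GammaG p E 1 j * (qq p (bG E j) - qq p (bG E (j - 1))) / qq p (bG E (j - 1))) /
        (∑ j ∈ Finset.Icc 1 N, GammaG p E 1 j * dpar a j / qq p (bG E (j - 1))) := by
  have hp := hap.2.2
  have hγ : ∀ u v, (u, v) ∈ E → 0 ≤ gammaG p E u v :=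
    fun u v h => gammaG_nonneg hp hE hN h
  have hmain := main_formula hap hE hs hPG hN
  set A := ∑ j ∈ Finset.Icc 1 N, GammaG p E 1 j * dpar a j / qq p (bG E (j - 1)) with hA
  set B := ∑ j ∈ Finset.Icc 1 N,
      GammaG p E 1 j * (qq p (bG E j) - qq p (bG E (j - 1))) / qq p (bG E (j - 1)) with hB
  have hq'pos : ∀ j, 1 ≤ j → j ≤ N → (0 : ℝ) < qq p (bG E (j - 1)) := by
    intro j hj hjN
    exact qq_pos hp (one_le_bG E _)
      (le_trans (bG_pred_le hE hj) (bG_le hE hN hjN))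
  have hterm_nonneg : ∀ j ∈ Finset.Icc 1 N,
      0 ≤ GammaG p E 1 j * dpar a j / qq p (bG E (j - 1)) := by
    intro j hj
    rw [Finset.mem_Icc] at hj
    apply div_nonneg
    · exact mul_nonneg (GammaPath_nonneg hγ 1 j) (dpar_nonneg hap hj.1 hj.2)
    · exact (hq'pos j hj.1 hj.2).le
  have hApos : 0 < A := by
    rw [hA]
    apply Finset.sum_pos' hterm_nonneg
    refine ⟨1, Finset.mem_Icc.mpr ⟨le_rfl, hN⟩, ?_⟩
    rw [show bG E (1 - 1) = 1 from by norm_num [bG]]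
    rw [GammaG, GammaPath_self, one_mul, dpar, if_pos rfl]
    exact div_pos hap.1 (qq_pos hp le_rfl hN)
  have hBnn : 0 ≤ B := by
    rw [hB]
    apply Finset.sum_nonneg
    intro j hj
    rw [Finset.mem_Icc] at hj
    apply div_nonneg
    · apply mul_nonneg (GammaPath_nonneg hγ 1 j)
      have := qq_mono hp (bG_pred_le hE hj.1) (bG_le hE hN hj.2)
      linarith
    · exact (hq'pos j hj.1 hj.2).le
  have hs1 : 0 < s 1 := hs.1
  have h1eq : s 1 = A - s 1 * B := by
    have h := hmain 1 le_rfl hN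
    rw [show zfun s 1 = s 1 from by unfold zfun; rw [if_pos rfl]] at h
    rw [split_sum a p E (s 1) (Finset.Icc 1 N) 1, ← hA, ← hB] at h
    exact h
  have h1B : (0 : ℝ) < 1 + B := by linarith
  have hABs : s 1 * (1 + B) = A := by linarith [h1eq]  -- s1 + s1*B = A
  have hz1G : z1G N a p E = s 1 := by
    rw [z1G, ← hA, ← hB, div_eq_iff (ne_of_gt h1B)]
    linear_combination -hABs
  constructor
  · intro i hi hiN
    have hz := hmain i hi hiN
    have hlhs : s i - (if i = 1 then 0 else s (i - 1)) = zfun s i := by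
      unfold zfun
      by_cases h : i = 1
      · rw [if_pos h, if_pos h, h, sub_zero]
      · rw [if_neg h, if_neg h]
    rw [hlhs, hz, zG]
    split_ifs with h
    · subst h
      rw [split_sum a p E (s 1) (Finset.Icc 1 N) 1, ← hA, ← hB, hz1G]
      linarith [h1eq]
    · rw [split_sum a p E (s 1) (Finset.Icc i N) i, hz1G]
  · rw [div_eq_div_iff (ne_of_gt hs1) (ne_of_gt hApos)]
    linear_combination -hABs
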